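/- (Fannes inequality, weak form) For density operators ρ and ω on a d-dimensional Hilbert space, |H(ρ) − H(ω)| ≤ 1/e + (log d)·‖ρ − ω‖₁. -/

import Mathlib

open Matrix Kronecker BigOperators ComplexOrder

/-- Trace norm `‖A‖₁ = Tr √(Aᴴ A)`. -/
noncomputable def traceNorm {n : Type*} [Fintype n] [DecidableEq n]
    (A : Matrix n n ℂ) : ℝ :=
  (((Matrix.posSemidef_conjTranspose_mul_self A).1.eigenvectorUnitary.1 *
      diagonal ((RCLike.ofReal : ℝ → ℂ) ∘ (√·) ∘ (Matrix.posSemidef_conjTranspose_mul_self A).1.eigenvalues) *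
      (star (Matrix.posSemidef_conjTranspose_mul_self A).1.eigenvectorUnitary :
        Matrix n n ℂ)).trace).re

/-- Von Neumann entropy (base 2), via eigenvalues; `0` for non-Hermitian input. -/
noncomputable def vnEntropy {n : Type*} [Fintype n] [DecidableEq n]
    (ρ : Matrix n n ℂ) : ℝ :=
  if h : ρ.IsHermitian then
    -∑ i, (h.eigenvalues i) * Real.logb 2 (h.eigenvalues i)
  else 0

/-- A density operator: positive semidefinite with unit trace. -/
def IsDensity {n : Type*} [Fintype n] (ρ : Matrix n n ℂ) : Prop :=
  ρ.PosSemidef ∧ ρ.trace = 1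

/-- Rank-one projector `|v⟩⟨v|`. -/
noncomputable def proj {n : Type*} (v : n → ℂ) : Matrix n n ℂ :=
  Matrix.vecMulVec v (star v)

/-- Partial trace over the second tensor factor. -/
noncomputable def ptraceSnd {a b : Type*} [Fintype b]
    (ρ : Matrix (a × b) (a × b) ℂ) : Matrix a a ℂ :=
  Matrix.of fun i j => ∑ k, ρ (i, k) (j, k)

/-- Partial trace over the first tensor factor. -/
noncomputable def ptraceFst {a b : Type*} [Fintype a]
    (ρ : Matrix (a × b) (a × b) ℂ) : Matrix b b ℂ :=
  Matrix.of fun i j => ∑ k, ρ (k, i) (k, j)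

/-- Quantum mutual information `I(A;B) = H(A) + H(B) − H(AB)`. -/
noncomputable def mutualInfo {a b : Type*} [Fintype a] [Fintype b]
    [DecidableEq a] [DecidableEq b] (ρ : Matrix (a × b) (a × b) ℂ) : ℝ :=
  vnEntropy (ptraceSnd ρ) + vnEntropy (ptraceFst ρ) - vnEntropy ρ

/-- `n`-fold tensor power of a matrix. -/
noncomputable def tpow {d : ℕ} (ρ : Matrix (Fin d) (Fin d) ℂ) (n : ℕ) :
    Matrix (Fin n → Fin d) (Fin n → Fin d) ℂ :=
  Matrix.of fun f g => ∏ i, ρ (f i) (g i)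

/-- The cq state obtained by measuring the `A` part of a bipartite state with POVM `Λ`:
`ρ^{XB} = Σ_x |x⟩⟨x| ⊗ Tr_A((Λ_x ⊗ I)ρ)`. -/
noncomputable def measureA {a b m : Type*} [Fintype a] [DecidableEq m]
    (Λ : m → Matrix a a ℂ) (ρ : Matrix (a × b) (a × b) ℂ) :
    Matrix (m × b) (m × b) ℂ :=
  Matrix.of fun xi yj =>
    if xi.1 = yj.1 then ∑ k, ∑ l, (Λ xi.1) k l * ρ (l, xi.2) (k, yj.2) else 0

/-- Unitarity for (possibly rectangular between index types) matrices. -/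
def IsUnitaryMat {p q : Type*} [Fintype p] [Fintype q] [DecidableEq p] [DecidableEq q]
    (U : Matrix p q ℂ) : Prop :=
  U * Uᴴ = 1 ∧ Uᴴ * U = 1


open scoped InnerProductSpace

section FannesAux

variable {d : ℕ} {A B : Matrix (Fin d) (Fin d) ℂ}

noncomputable def ent (x : ℝ) : ℝ := -(x * Real.log x)

lemma ent_tangent (c : ℝ) {x : ℝ} (hx : 0 ≤ x) : ent x ≤ Real.exp (-1 - c) + c * x := by
  rcases eq_or_lt_of_le hx with h | h
  · simp only [ent, ← h, mul_comm, Real.log_zero, mul_zero, zero_mul, neg_zero, mul_zero,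
      add_zero]
    positivity
  · have h1 : (-1 - c - Real.log x) + 1 ≤ Real.exp (-1 - c - Real.log x) :=
      Real.add_one_le_exp _
    have h2 : Real.exp (-1 - c - Real.log x) = Real.exp (-1 - c) / x := by
      rw [Real.exp_sub, Real.exp_log h]
    rw [h2] at h1
    have h3 : (-c - Real.log x) * x ≤ (Real.exp (-1 - c) / x) * x := by
      apply mul_le_mul_of_nonneg_right _ hx
      linarith
    rw [div_mul_cancel₀ _ (ne_of_gt h)] at h3
    unfold ent; nlinarith

lemma ent_subadd {q e : ℝ} (hq : 0 ≤ q) (he : 0 ≤ e) : ent (q + e) ≤ ent q + ent e := by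
  rcases eq_or_lt_of_le hq with h | h
  · simp [ent, ← h]
  rcases eq_or_lt_of_le he with h' | h'
  · simp [ent, ← h']
  have l1 : Real.log q ≤ Real.log (q + e) := Real.log_le_log h (by linarith)
  have l2 : Real.log e ≤ Real.log (q + e) := Real.log_le_log h' (by linarith)
  unfold ent; nlinarith

lemma ent_drop {p q : ℝ} (hp : 0 ≤ p) (hpq : p ≤ q) (hq1 : q ≤ 1) : ent p - ent q ≤ q - p := by
  rcases eq_or_lt_of_le hp with h | h
  · have hl : Real.log q ≤ 0 := Real.log_nonpos (by linarith) hq1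
    have : 0 ≤ ent q := by unfold ent; nlinarith
    simp only [ent, ← h, Real.log_zero, mul_zero, zero_mul, neg_zero, mul_zero] at this ⊢
    nlinarith
  · have hq : 0 < q := lt_of_lt_of_le h hpq
    have l1 : Real.log (q / p) ≤ q / p - 1 := Real.log_le_sub_one_of_pos (by positivity)
    rw [Real.log_div (ne_of_gt hq) (ne_of_gt h)] at l1
    have l3 : p * (Real.log q - Real.log p) ≤ p * (q / p - 1) :=
      mul_le_mul_of_nonneg_left l1 hp
    have l4 : p * (q / p - 1) = q - p := by field_simp
    have hlq : Real.log q ≤ 0 := Real.log_nonpos hq.le hq1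
    unfold ent; nlinarith

lemma classical_fannes {d : ℕ} (p q : Fin d → ℝ)
    (hp0 : ∀ i, 0 ≤ p i) (hq0 : ∀ i, 0 ≤ q i)
    (hp1 : ∑ i, p i = 1) (hq1 : ∑ i, q i = 1) :
    ∑ i, ent (p i) - ∑ i, ent (q i) ≤ 1/4 + Real.log d * ∑ i, |p i - q i| := by
  classical
  have hd : 0 < d := by
    by_contra h
    push_neg at h
    interval_cases d
    simp at hp1
  set c : ℝ := 2 * Real.log d - 1 with hc
  have hexp : Real.exp (-1 - c) = ((d:ℝ)^2)⁻¹ := by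
    have : -1 - c = -Real.log ((d:ℝ)^2) := by
      rw [Real.log_pow, hc]; push_cast; ring
    rw [this, Real.exp_neg, Real.exp_log (by positivity)]
  set I : Finset (Fin d) := Finset.univ.filter (fun i => q i < p i) with hI
  set a : ℝ := ∑ i ∈ I, (p i - q i) with ha
  have ha0 : 0 ≤ a := Finset.sum_nonneg fun i hi => by
    simp [hI] at hi; linarith
  have hsum0 : ∑ i, (p i - q i) = 0 := by rw [Finset.sum_sub_distrib, hp1, hq1]; ring
  have hsplit : ∑ i ∈ I, (p i - q i) + ∑ i ∈ Iᶜ, (p i - q i) = 0 := by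
    rw [Finset.sum_add_sum_compl]
    exact hsum0
  have hcompl : ∑ i ∈ Iᶜ, (q i - p i) = a := by
    have : ∑ i ∈ Iᶜ, (q i - p i) = -∑ i ∈ Iᶜ, (p i - q i) := by
      rw [← Finset.sum_neg_distrib]; apply Finset.sum_congr rfl; intros; ring
    rw [this]; linarith
  have habs : ∑ i, |p i - q i| = 2 * a := by
    rw [← Finset.sum_add_sum_compl I]
    have h1 : ∑ i ∈ I, |p i - q i| = a := by
      rw [ha]; apply Finset.sum_congr rfl; intro i hi
      simp [hI] at hi; rw [abs_of_pos]; linarith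
    have h2 : ∑ i ∈ Iᶜ, |p i - q i| = a := by
      rw [← hcompl]; apply Finset.sum_congr rfl; intro i hi
      simp [hI] at hi; rw [abs_of_nonpos] <;> linarith
    rw [h1, h2]; ring
  have hcard : (I.card : ℝ) * ((d:ℝ)^2)⁻¹ ≤ 1/4 := by
    rcases eq_or_lt_of_le ha0 with h0 | hpos
    · have : I = ∅ := by
        by_contra hne
        have : 0 < a := Finset.sum_pos (fun i hi => by simp [hI] at hi; linarith)
          (Finset.nonempty_iff_ne_empty.mpr hne)
        linarith
      simp [this]
    · -- some j with q j - p j > 0 in Iᶜ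
      have : ∃ j ∈ Iᶜ, 0 < q j - p j := by
        by_contra hno
        push_neg at hno
        have : ∑ i ∈ Iᶜ, (q i - p i) ≤ 0 := Finset.sum_nonpos fun i hi => hno i hi
        rw [hcompl] at this; linarith
      obtain ⟨j, hj, hj2⟩ := this
      have hsub : I ⊆ Finset.univ.erase j := by
        intro i hi
        refine Finset.mem_erase.mpr ⟨?_, Finset.mem_univ _⟩
        rintro rfl
        simp [hI] at hi; linarith
      have hcard' : I.card ≤ d - 1 := by
        have := Finset.card_le_card hsub
        simpa [Finset.card_erase_of_mem] using this
      have hcardR : (I.card : ℝ) ≤ (d:ℝ) - 1 := by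
        have h1 : (I.card : ℝ) ≤ ((d - 1 : ℕ) : ℝ) := by exact_mod_cast hcard'
        have h2 : ((d - 1 : ℕ) : ℝ) = (d:ℝ) - 1 := by
          have : (1:ℕ) ≤ d := hd
          push_cast [this]; ring
        linarith
      have hd1 : (1:ℝ) ≤ (d:ℝ) := by exact_mod_cast hd
      have hd2 : (0:ℝ) < (d:ℝ)^2 := by positivity
      have step1 : (I.card : ℝ) * ((d:ℝ)^2)⁻¹ ≤ ((d:ℝ) - 1) * ((d:ℝ)^2)⁻¹ :=
        mul_le_mul_of_nonneg_right hcardR (by positivity)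
      have step2 : ((d:ℝ) - 1) * ((d:ℝ)^2)⁻¹ ≤ 1/4 := by
        rw [inv_eq_one_div, mul_one_div, div_le_div_iff₀ hd2 (by norm_num : (0:ℝ) < 4)]
        nlinarith [sq_nonneg ((d:ℝ) - 2)]
      linarith
  have hq1' : ∀ i, q i ≤ 1 := by
    intro i
    rw [← hq1]
    exact Finset.single_le_sum (fun j _ => hq0 j) (Finset.mem_univ i)
  have hIbound : ∀ i ∈ I, ent (p i) - ent (q i) ≤ Real.exp (-1 - c) + c * (p i - q i) := by
    intro i hi
    simp only [hI, Finset.mem_filter] at hi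
    have h1 : ent (p i) ≤ ent (q i) + ent (p i - q i) := by
      have := ent_subadd (hq0 i) (le_of_lt (sub_pos.mpr hi.2))
      rw [add_sub_cancel] at this
      exact this
    have h2 := ent_tangent c (le_of_lt (sub_pos.mpr hi.2))
    linarith
  have hJbound : ∀ i ∈ Iᶜ, ent (p i) - ent (q i) ≤ q i - p i := by
    intro i hi
    simp only [hI, Finset.compl_filter, Finset.mem_filter] at hi
    have hle : p i ≤ q i := by
      rcases hi with ⟨-, h⟩
      linarith [not_lt.mp h]
    exact ent_drop (hp0 i) hle (hq1' i)
  have main : ∑ i, ent (p i) - ∑ i, ent (q i) ≤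
      (I.card : ℝ) * Real.exp (-1 - c) + c * a + a := by
    have e1 : ∑ i, ent (p i) - ∑ i, ent (q i)
        = ∑ i ∈ I, (ent (p i) - ent (q i)) + ∑ i ∈ Iᶜ, (ent (p i) - ent (q i)) := by
      rw [Finset.sum_add_sum_compl I (fun i => ent (p i) - ent (q i)),
        Finset.sum_sub_distrib]
    have e2 : ∑ i ∈ I, (ent (p i) - ent (q i)) ≤
        (I.card : ℝ) * Real.exp (-1 - c) + c * a := by
      calc ∑ i ∈ I, (ent (p i) - ent (q i))
          ≤ ∑ i ∈ I, (Real.exp (-1 - c) + c * (p i - q i)) := Finset.sum_le_sum hIbound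
        _ = (I.card : ℝ) * Real.exp (-1 - c) + c * a := by
            rw [Finset.sum_add_distrib, Finset.sum_const, ← Finset.mul_sum, ha]
            simp [mul_comm]
    have e3 : ∑ i ∈ Iᶜ, (ent (p i) - ent (q i)) ≤ a := by
      rw [← hcompl]
      exact Finset.sum_le_sum hJbound
    linarith
  rw [habs, hexp] at *
  have hfin : c * a + a = Real.log d * (2 * a) := by rw [hc]; ring
  linarith


lemma finrank_span_onb (b : OrthonormalBasis (Fin d) ℂ (EuclideanSpace ℂ (Fin d)))
    (S : Finset (Fin d)) :
    Module.finrank ℂ (Submodule.span ℂ (⇑b '' ↑S)) = S.card := by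
  have li : LinearIndependent ℂ (fun i : ↥(↑S : Set (Fin d)) => b ↑i) :=
    b.orthonormal.linearIndependent.comp _ Subtype.val_injective
  rw [Set.image_eq_range, finrank_span_eq_card li]
  simp

lemma psd_inner_nonneg {M : Matrix (Fin d) (Fin d) ℂ} (hM : M.PosSemidef)
    (x : EuclideanSpace ℂ (Fin d)) :
    0 ≤ RCLike.re ⟪x, Matrix.toEuclideanLin M x⟫_ℂ := by
  have h := hM.dotProduct_mulVec_nonneg (WithLp.equiv 2 (Fin d → ℂ) x)
  have heq : ⟪x, Matrix.toEuclideanLin M x⟫_ℂ =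
      dotProduct (star (WithLp.equiv 2 (Fin d → ℂ) x))
        (M *ᵥ (WithLp.equiv 2 (Fin d → ℂ) x)) := by
    rw [EuclideanSpace.inner_eq_star_dotProduct, dotProduct_comm]
    rfl
  rw [heq]
  exact (Complex.le_def.1 h).1


lemma supp_span (b : OrthonormalBasis (Fin d) ℂ (EuclideanSpace ℂ (Fin d))) (S : Finset (Fin d))
    (x : EuclideanSpace ℂ (Fin d)) (hx : x ∈ Submodule.span ℂ (⇑b '' ↑S))
    (j : Fin d) (hj : j ∉ S) : ⟪b j, x⟫_ℂ = 0 := by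
  have hker : Submodule.span ℂ (⇑b '' ↑S) ≤ LinearMap.ker (innerₛₗ ℂ (b j)) := by
    rw [Submodule.span_le]
    rintro y ⟨i, hiS, rfl⟩
    simp only [SetLike.mem_coe, LinearMap.mem_ker]
    have hne : j ≠ i := fun h => hj (h ▸ hiS)
    simpa using b.orthonormal.2 hne
  simpa using hker hx

lemma parseval_inner (b : OrthonormalBasis (Fin d) ℂ (EuclideanSpace ℂ (Fin d)))
    (x y : EuclideanSpace ℂ (Fin d)) :
    ⟪x, y⟫_ℂ = ∑ i, (starRingEnd ℂ) ⟪b i, x⟫_ℂ * ⟪b i, y⟫_ℂ := by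
  rw [← b.sum_inner_mul_inner x y]
  congr 1; ext i
  rw [inner_conj_symm]

lemma eigvec_apply (hA : A.IsHermitian) (i : Fin d) :
    Matrix.toEuclideanLin A (hA.eigenvectorBasis i) =
      ((hA.eigenvalues i : ℂ)) • hA.eigenvectorBasis i := by
  have h := hA.mulVec_eigenvectorBasis i
  rw [Matrix.toEuclideanLin_apply]
  have h2 : WithLp.equiv 2 (Fin d → ℂ) (hA.eigenvectorBasis i) = ⇑(hA.eigenvectorBasis i) := rfl
  rw [h, WithLp.toLp_smul, WithLp.toLp_ofLp]
  exact RCLike.real_smul_eq_coe_smul _ _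

lemma inner_toEuclideanLin (hA : A.IsHermitian) (x : EuclideanSpace ℂ (Fin d)) (i : Fin d) :
    ⟪hA.eigenvectorBasis i, Matrix.toEuclideanLin A x⟫_ℂ =
      (hA.eigenvalues i : ℂ) * ⟪hA.eigenvectorBasis i, x⟫_ℂ := by
  have hsym := (Matrix.isHermitian_iff_isSymmetric).1 hA
  rw [← hsym (hA.eigenvectorBasis i) x, eigvec_apply hA i, inner_smul_left,
    Complex.conj_ofReal]

lemma quad_repr (hA : A.IsHermitian) (S : Finset (Fin d)) (x : EuclideanSpace ℂ (Fin d))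
    (hx : x ∈ Submodule.span ℂ (⇑hA.eigenvectorBasis '' ↑S)) :
    ∃ r : Fin d → ℝ, (∀ i, 0 ≤ r i) ∧ (∀ i ∉ S, r i = 0) ∧
      ((∑ i, r i) = RCLike.re ⟪x, x⟫_ℂ) ∧
      RCLike.re ⟪x, Matrix.toEuclideanLin A x⟫_ℂ = ∑ i, hA.eigenvalues i * r i := by
  set b := hA.eigenvectorBasis with hb
  refine ⟨fun i => Complex.normSq ⟪b i, x⟫_ℂ, fun i => Complex.normSq_nonneg _,
    fun i hi => by simp only []; rw [supp_span b S x hx i hi]; simp, ?_, ?_⟩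
  · rw [parseval_inner b x x]
    rw [map_sum]
    congr 1; ext i
    rw [← Complex.normSq_eq_conj_mul_self]
    simp
  · rw [parseval_inner b x (Matrix.toEuclideanLin A x)]
    rw [map_sum]
    congr 1; ext i
    rw [inner_toEuclideanLin hA x i]
    have : (starRingEnd ℂ) ⟪b i, x⟫_ℂ * ((hA.eigenvalues i : ℂ) * ⟪b i, x⟫_ℂ)
        = (hA.eigenvalues i : ℂ) * ((starRingEnd ℂ) ⟪b i, x⟫_ℂ * ⟪b i, x⟫_ℂ) := by ring
    rw [this, ← Complex.normSq_eq_conj_mul_self]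
    simp [Complex.ofReal_mul]

lemma weyl_mono (hA : A.IsHermitian) (hB : B.IsHermitian) (hAB : (B - A).PosSemidef) (k : Fin d) :
    hA.eigenvalues (Tuple.sort hA.eigenvalues k) ≤ hB.eigenvalues (Tuple.sort hB.eigenvalues k) := by
  set σ := Tuple.sort hA.eigenvalues with hσ
  set τ := Tuple.sort hB.eigenvalues with hτ
  set SA : Finset (Fin d) := (Finset.Ici k).image σ with hSA
  set SB : Finset (Fin d) := (Finset.Iic k).image τ with hSB
  set V := Submodule.span ℂ (⇑hA.eigenvectorBasis '' ↑SA) with hV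
  set W := Submodule.span ℂ (⇑hB.eigenvectorBasis '' ↑SB) with hW
  have hVd : Module.finrank ℂ V = d - k := by
    rw [hV, finrank_span_onb, hSA, Finset.card_image_of_injective _ (Equiv.injective σ),
      Fin.card_Ici]
  have hWd : Module.finrank ℂ W = k + 1 := by
    rw [hW, finrank_span_onb, hSB, Finset.card_image_of_injective _ (Equiv.injective τ),
      Fin.card_Iic]
  have hdim : 0 < Module.finrank ℂ ↥(V ⊓ W) := by
    have h1 := Submodule.finrank_sup_add_finrank_inf_eq V W
    have h2 : Module.finrank ℂ ↥(V ⊔ W) ≤ d := by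
      have := Submodule.finrank_le (V ⊔ W)
      rwa [finrank_euclideanSpace_fin] at this
    have hk : (k : ℕ) < d := k.isLt
    omega
  have hne : V ⊓ W ≠ ⊥ := by
    intro h
    rw [h, finrank_bot] at hdim
    exact lt_irrefl 0 hdim
  obtain ⟨x, hxVW, hx0⟩ := (Submodule.ne_bot_iff _).1 hne
  obtain ⟨hxV, hxW⟩ := Submodule.mem_inf.1 hxVW
  obtain ⟨rA, hrA0, hrAsupp, hrAsum, hrAquad⟩ := quad_repr hA SA x hxV
  obtain ⟨rB, hrB0, hrBsupp, hrBsum, hrBquad⟩ := quad_repr hB SB x hxW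
  have hlow : hA.eigenvalues (σ k) * (∑ i, rA i) ≤ ∑ i, hA.eigenvalues i * rA i := by
    rw [Finset.mul_sum]
    apply Finset.sum_le_sum
    intro i _
    rcases em (i ∈ SA) with hi | hi
    · obtain ⟨m, hm, rfl⟩ := Finset.mem_image.1 hi
      exact mul_le_mul_of_nonneg_right
        (Tuple.monotone_sort hA.eigenvalues (Finset.mem_Ici.1 hm)) (hrA0 _)
    · rw [hrAsupp i hi]; simp
  have hup : ∑ i, hB.eigenvalues i * rB i ≤ hB.eigenvalues (τ k) * (∑ i, rB i) := by
    rw [Finset.mul_sum]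
    apply Finset.sum_le_sum
    intro i _
    rcases em (i ∈ SB) with hi | hi
    · obtain ⟨m, hm, rfl⟩ := Finset.mem_image.1 hi
      exact mul_le_mul_of_nonneg_right
        (Tuple.monotone_sort hB.eigenvalues (Finset.mem_Iic.1 hm)) (hrB0 _)
    · rw [hrBsupp i hi]; simp
  have hmid : RCLike.re ⟪x, Matrix.toEuclideanLin A x⟫_ℂ ≤
      RCLike.re ⟪x, Matrix.toEuclideanLin B x⟫_ℂ := by
    have h := psd_inner_nonneg hAB x
    have he : Matrix.toEuclideanLin (B - A) = Matrix.toEuclideanLin B - Matrix.toEuclideanLin A :=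
      map_sub _ _ _
    rw [he] at h
    simp only [LinearMap.sub_apply, inner_sub_right, map_sub] at h
    linarith
  have hn2 : 0 < RCLike.re ⟪x, x⟫_ℂ := by
    rw [inner_self_eq_norm_sq]
    have : ‖x‖ ≠ 0 := norm_ne_zero_iff.2 hx0
    positivity
  have hfin : hA.eigenvalues (σ k) * RCLike.re ⟪x, x⟫_ℂ ≤
      hB.eigenvalues (τ k) * RCLike.re ⟪x, x⟫_ℂ := by
    calc hA.eigenvalues (σ k) * RCLike.re ⟪x, x⟫_ℂ
        = hA.eigenvalues (σ k) * (∑ i, rA i) := by rw [hrAsum]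
      _ ≤ ∑ i, hA.eigenvalues i * rA i := hlow
      _ = RCLike.re ⟪x, Matrix.toEuclideanLin A x⟫_ℂ := hrAquad.symm
      _ ≤ RCLike.re ⟪x, Matrix.toEuclideanLin B x⟫_ℂ := hmid
      _ = ∑ i, hB.eigenvalues i * rB i := hrBquad
      _ ≤ hB.eigenvalues (τ k) * (∑ i, rB i) := hup
      _ = hB.eigenvalues (τ k) * RCLike.re ⟪x, x⟫_ℂ := by rw [hrBsum]
  exact le_of_mul_le_mul_right hfin hn2



/-- conjugation of a real diagonal by the eigenvector unitary of a Hermitian matrix -/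
noncomputable def cdg {A : Matrix (Fin d) (Fin d) ℂ} (hA : A.IsHermitian) (f : Fin d → ℝ) :
    Matrix (Fin d) (Fin d) ℂ :=
  (hA.eigenvectorUnitary : Matrix (Fin d) (Fin d) ℂ) * Matrix.diagonal (fun i => (f i : ℂ)) *
    star (hA.eigenvectorUnitary : Matrix (Fin d) (Fin d) ℂ)

lemma cdg_posSemidef {A : Matrix (Fin d) (Fin d) ℂ} (hA : A.IsHermitian) {f : Fin d → ℝ}
    (hf : ∀ i, 0 ≤ f i) : (cdg hA f).PosSemidef := by
  have hdiag : (Matrix.diagonal (fun i => (f i : ℂ))).PosSemidef := by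
    rw [Matrix.posSemidef_diagonal_iff]
    intro i
    exact_mod_cast hf i
  have := hdiag.mul_mul_conjTranspose_same (hA.eigenvectorUnitary : Matrix (Fin d) (Fin d) ℂ)
  rwa [← Matrix.star_eq_conjTranspose] at this

lemma cdg_trace {A : Matrix (Fin d) (Fin d) ℂ} (hA : A.IsHermitian) (f : Fin d → ℝ) :
    (cdg hA f).trace = ((∑ i, f i : ℝ) : ℂ) := by
  rw [cdg, Matrix.trace_mul_cycle, Matrix.UnitaryGroup.star_mul_self, one_mul,
    Matrix.trace_diagonal]
  push_cast
  rfl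

lemma cdg_add {A : Matrix (Fin d) (Fin d) ℂ} (hA : A.IsHermitian) (f g : Fin d → ℝ) :
    cdg hA f + cdg hA g = cdg hA (f + g) := by
  rw [cdg, cdg, cdg, ← add_mul, ← mul_add, Matrix.diagonal_add]
  congr 2
  ext i
  push_cast
  simp

lemma cdg_mul {A : Matrix (Fin d) (Fin d) ℂ} (hA : A.IsHermitian) (f g : Fin d → ℝ) :
    cdg hA f * cdg hA g = cdg hA (f * g) := by
  rw [cdg, cdg, cdg]
  have h1 : star (hA.eigenvectorUnitary : Matrix (Fin d) (Fin d) ℂ) *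
      (hA.eigenvectorUnitary : Matrix (Fin d) (Fin d) ℂ) = 1 :=
    Matrix.UnitaryGroup.star_mul_self _
  set U : Matrix (Fin d) (Fin d) ℂ := (hA.eigenvectorUnitary : Matrix (Fin d) (Fin d) ℂ)
  calc U * Matrix.diagonal (fun i => (f i : ℂ)) * star U *
        (U * Matrix.diagonal (fun i => (g i : ℂ)) * star U)
      = U * Matrix.diagonal (fun i => (f i : ℂ)) * (star U * U) *
          Matrix.diagonal (fun i => (g i : ℂ)) * star U := by noncomm_ring
    _ = U * (Matrix.diagonal (fun i => (f i : ℂ)) * Matrix.diagonal (fun i => (g i : ℂ))) *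
          star U := by rw [h1]; noncomm_ring
    _ = U * Matrix.diagonal (fun i => ((f * g) i : ℂ)) * star U := by
        rw [Matrix.diagonal_mul_diagonal]
        congr 2
        ext i
        push_cast
        simp

lemma cdg_eig {A : Matrix (Fin d) (Fin d) ℂ} (hA : A.IsHermitian) :
    cdg hA hA.eigenvalues = A := by
  rw [cdg]
  convert hA.spectral_theorem.symm using 2
  rw [Unitary.conjStarAlgAut_apply]
  rfl

lemma herm_trace_eq {A : Matrix (Fin d) (Fin d) ℂ} (hA : A.IsHermitian) :
    A.trace = ((∑ i, hA.eigenvalues i : ℝ) : ℂ) := by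
  conv_lhs => rw [← cdg_eig hA]
  rw [cdg_trace]

lemma traceNorm_herm {A : Matrix (Fin d) (Fin d) ℂ} (hA : A.IsHermitian) :
    traceNorm A = ∑ i, |hA.eigenvalues i| := by
  have habs : (fun i => |hA.eigenvalues i|) * (fun i => |hA.eigenvalues i|) =
      hA.eigenvalues * hA.eigenvalues := by
    ext i; exact abs_mul_abs_self _
  have hN : (cdg hA (fun i => |hA.eigenvalues i|)).PosSemidef :=
    cdg_posSemidef hA (fun i => abs_nonneg _)
  have hsq : (cdg hA (fun i => |hA.eigenvalues i|)) ^ 2 = Aᴴ * A := by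
    rw [pow_two, cdg_mul, habs, ← cdg_mul, cdg_eig, hA.eq]
  have hP := Matrix.posSemidef_conjTranspose_mul_self A
  have hS : (cdg hP.1 (fun i => √(hP.1.eigenvalues i))).PosSemidef :=
    cdg_posSemidef hP.1 (fun i => Real.sqrt_nonneg _)
  have hS2 : (cdg hP.1 (fun i => √(hP.1.eigenvalues i))) ^ 2 = Aᴴ * A := by
    have hf : (fun i => √(hP.1.eigenvalues i)) * (fun i => √(hP.1.eigenvalues i)) =
        hP.1.eigenvalues := by
      ext i; exact Real.mul_self_sqrt (hP.eigenvalues_nonneg i)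
    rw [pow_two, cdg_mul, hf, cdg_eig]
  have heq : cdg hP.1 (fun i => √(hP.1.eigenvalues i)) = cdg hA (fun i => |hA.eigenvalues i|) := by
    open scoped MatrixOrder in
    exact (CFC.sq_eq_sq_iff _ _ hS.nonneg hN.nonneg).1 (hS2.trans hsq.symm)
  have htn : traceNorm A = (cdg hP.1 (fun i => √(hP.1.eigenvalues i))).trace.re := rfl
  rw [htn, heq, cdg_trace, Complex.ofReal_re]


lemma abs_eq_add_two_neg (x : ℝ) : |x| = x + 2 * max (-x) 0 := by
  rcases le_total 0 x with h | h
  · rw [abs_of_nonneg h, max_eq_right (by linarith)]; ring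
  · rw [abs_of_nonpos h, max_eq_left (by linarith)]; ring

lemma trace_one_sum_eig {ρ : Matrix (Fin d) (Fin d) ℂ} (hh : ρ.IsHermitian)
    (h1 : ρ.trace = 1) : ∑ i, hh.eigenvalues i = 1 := by
  have := herm_trace_eq hh
  rw [h1] at this
  exact_mod_cast this.symm

lemma sorted_abs_diff_le {ρ ω : Matrix (Fin d) (Fin d) ℂ} (hρ : ρ.PosSemidef) (hω : ω.PosSemidef)
    (hρ1 : ρ.trace = 1) (hω1 : ω.trace = 1) :
    ∑ k, |hρ.1.eigenvalues (Tuple.sort hρ.1.eigenvalues k)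
        - hω.1.eigenvalues (Tuple.sort hω.1.eigenvalues k)| ≤ traceNorm (ρ - ω) := by
  have hΔ : (ρ - ω).IsHermitian := hρ.1.sub hω.1
  set ν : Fin d → ℝ := hΔ.eigenvalues with hν
  set Dneg := cdg hΔ (fun i => max (-ν i) 0) with hDneg
  have hDnegPSD : Dneg.PosSemidef := cdg_posSemidef hΔ (fun i => le_max_right _ _)
  set M := ρ + Dneg with hM
  have hMh : M.IsHermitian := hρ.1.add hDnegPSD.1
  have hMρ : (M - ρ).PosSemidef := by
    have : M - ρ = Dneg := by rw [hM]; abel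
    rw [this]; exact hDnegPSD
  have hMω : (M - ω).PosSemidef := by
    have h1 : M - ω = (ρ - ω) + Dneg := by rw [hM]; abel
    have h2 : (ρ - ω) + Dneg = cdg hΔ (fun i => max (ν i) 0) := by
      have e := cdg_add hΔ ν (fun i => max (-ν i) 0)
      rw [cdg_eig hΔ] at e
      rw [hDneg, e]
      have hfun : (ν + fun i => max (-ν i) 0) = (fun i => max (ν i) 0) := by
        funext i
        show ν i + max (-ν i) 0 = max (ν i) 0
        rcases le_total (ν i) 0 with h | h
        · rw [max_eq_left (by linarith), max_eq_right h]; ring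
        · rw [max_eq_right (by linarith), max_eq_left h]; ring
      rw [hfun]
    rw [h1, h2]
    exact cdg_posSemidef hΔ (fun i => le_max_right _ _)
  have hWρ : ∀ k, hρ.1.eigenvalues (Tuple.sort hρ.1.eigenvalues k)
      ≤ hMh.eigenvalues (Tuple.sort hMh.eigenvalues k) := fun k => weyl_mono hρ.1 hMh hMρ k
  have hWω : ∀ k, hω.1.eigenvalues (Tuple.sort hω.1.eigenvalues k)
      ≤ hMh.eigenvalues (Tuple.sort hMh.eigenvalues k) := fun k => weyl_mono hω.1 hMh hMω k
  have habs : ∀ k, |hρ.1.eigenvalues (Tuple.sort hρ.1.eigenvalues k)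
      - hω.1.eigenvalues (Tuple.sort hω.1.eigenvalues k)|
      ≤ 2 * hMh.eigenvalues (Tuple.sort hMh.eigenvalues k)
        - hρ.1.eigenvalues (Tuple.sort hρ.1.eigenvalues k)
        - hω.1.eigenvalues (Tuple.sort hω.1.eigenvalues k) := by
    intro k
    rw [abs_le]
    constructor
    · have := hWρ k; have := hWω k; linarith
    · have := hWρ k; have := hWω k; linarith
  have hsum := Finset.sum_le_sum (fun k (_ : k ∈ Finset.univ) => habs k)
  -- sums of sorted eigenvalues
  have hsρ : ∑ k, hρ.1.eigenvalues (Tuple.sort hρ.1.eigenvalues k) = 1 := by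
    rw [Equiv.sum_comp (Tuple.sort hρ.1.eigenvalues) hρ.1.eigenvalues]
    exact trace_one_sum_eig hρ.1 hρ1
  have hsω : ∑ k, hω.1.eigenvalues (Tuple.sort hω.1.eigenvalues k) = 1 := by
    rw [Equiv.sum_comp (Tuple.sort hω.1.eigenvalues) hω.1.eigenvalues]
    exact trace_one_sum_eig hω.1 hω1
  have hsν : ∑ i, ν i = 0 := by
    have h := herm_trace_eq hΔ
    rw [Matrix.trace_sub, hρ1, hω1, sub_self] at h
    exact_mod_cast h.symm
  have hsM : ∑ k, hMh.eigenvalues (Tuple.sort hMh.eigenvalues k)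
      = 1 + ∑ i, max (-ν i) 0 := by
    rw [Equiv.sum_comp (Tuple.sort hMh.eigenvalues) hMh.eigenvalues]
    have h2 : ((∑ i, hMh.eigenvalues i : ℝ) : ℂ) = ((1 + ∑ i, max (-ν i) 0 : ℝ) : ℂ) := by
      rw [← herm_trace_eq hMh]
      show (ρ + Dneg).trace = _
      rw [Matrix.trace_add, hρ1, hDneg, cdg_trace]
      push_cast
      ring
    exact_mod_cast h2
  have htn : traceNorm (ρ - ω) = 2 * ∑ i, max (-ν i) 0 := by
    rw [traceNorm_herm hΔ]
    have : ∀ i, |ν i| = ν i + 2 * max (-ν i) 0 := fun i => abs_eq_add_two_neg (ν i)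
    rw [Finset.sum_congr rfl (fun i _ => this i), Finset.sum_add_distrib, hsν,
      ← Finset.mul_sum]
    ring
  rw [htn]
  calc ∑ k, |hρ.1.eigenvalues (Tuple.sort hρ.1.eigenvalues k)
        - hω.1.eigenvalues (Tuple.sort hω.1.eigenvalues k)|
      ≤ ∑ k, (2 * hMh.eigenvalues (Tuple.sort hMh.eigenvalues k)
        - hρ.1.eigenvalues (Tuple.sort hρ.1.eigenvalues k)
        - hω.1.eigenvalues (Tuple.sort hω.1.eigenvalues k)) := hsum
    _ = 2 * (1 + ∑ i, max (-ν i) 0) - 1 - 1 := by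
        rw [Finset.sum_sub_distrib, Finset.sum_sub_distrib, ← Finset.mul_sum, hsM, hsρ, hsω]
    _ = 2 * ∑ i, max (-ν i) 0 := by ring

lemma vnEntropy_eq {A : Matrix (Fin d) (Fin d) ℂ} (hA : A.IsHermitian) :
    vnEntropy A = (∑ i, ent (hA.eigenvalues i)) / Real.log 2 := by
  simp only [vnEntropy]
  rw [dif_pos hA, Finset.sum_div, ← Finset.sum_neg_distrib]
  apply Finset.sum_congr rfl
  intro i _
  simp only [ent, Real.logb]
  ring

end FannesAux

theorem fannes_inequality {d : ℕ} (hd : 0 < d)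
    (ρ ω : Matrix (Fin d) (Fin d) ℂ) (hρ : IsDensity ρ) (hω : IsDensity ω) :
    |vnEntropy ρ - vnEntropy ω| ≤ 1 / Real.exp 1 + Real.logb 2 d * traceNorm (ρ - ω) := by
  obtain ⟨hρp, hρ1⟩ := hρ
  obtain ⟨hωp, hω1⟩ := hω
  set p : Fin d → ℝ := fun k => hρp.1.eigenvalues (Tuple.sort hρp.1.eigenvalues k) with hp
  set q : Fin d → ℝ := fun k => hωp.1.eigenvalues (Tuple.sort hωp.1.eigenvalues k) with hq
  have hp0 : ∀ i, 0 ≤ p i := fun i => hρp.eigenvalues_nonneg _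
  have hq0 : ∀ i, 0 ≤ q i := fun i => hωp.eigenvalues_nonneg _
  have hp1 : ∑ i, p i = 1 := by
    simp only [hp]
    rw [Equiv.sum_comp (Tuple.sort hρp.1.eigenvalues) hρp.1.eigenvalues]
    exact trace_one_sum_eig hρp.1 hρ1
  have hq1 : ∑ i, q i = 1 := by
    simp only [hq]
    rw [Equiv.sum_comp (Tuple.sort hωp.1.eigenvalues) hωp.1.eigenvalues]
    exact trace_one_sum_eig hωp.1 hω1
  have hT : ∑ i, |p i - q i| ≤ traceNorm (ρ - ω) := sorted_abs_diff_le hρp hωp hρ1 hω1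
  have hd1 : (1:ℝ) ≤ (d:ℝ) := by exact_mod_cast hd
  have hlogd : 0 ≤ Real.log d := Real.log_nonneg hd1
  have hD1 := classical_fannes p q hp0 hq0 hp1 hq1
  have hD2 := classical_fannes q p hq0 hp0 hq1 hp1
  have habs_comm : ∑ i, |q i - p i| = ∑ i, |p i - q i| := by
    apply Finset.sum_congr rfl; intros; rw [abs_sub_comm]
  rw [habs_comm] at hD2
  have hEnt : |∑ k, ent (p k) - ∑ k, ent (q k)| ≤
      1/4 + Real.log d * ∑ i, |p i - q i| := abs_sub_le_iff.2 ⟨hD1, hD2⟩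
  have hvρ : vnEntropy ρ = (∑ k, ent (p k)) / Real.log 2 := by
    rw [vnEntropy_eq hρp.1]
    congr 1
    simp only [hp]
    exact (Equiv.sum_comp (Tuple.sort hρp.1.eigenvalues)
      (fun i => ent (hρp.1.eigenvalues i))).symm
  have hvω : vnEntropy ω = (∑ k, ent (q k)) / Real.log 2 := by
    rw [vnEntropy_eq hωp.1]
    congr 1
    simp only [hq]
    exact (Equiv.sum_comp (Tuple.sort hωp.1.eigenvalues)
      (fun i => ent (hωp.1.eigenvalues i))).symm
  have hlog2 : (0:ℝ) < Real.log 2 := Real.log_pos (by norm_num)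
  rw [hvρ, hvω, div_sub_div_same, abs_div, abs_of_pos hlog2]
  have step1 : |∑ k, ent (p k) - ∑ k, ent (q k)| / Real.log 2 ≤
      (1/4 + Real.log d * ∑ i, |p i - q i|) / Real.log 2 :=
    (div_le_div_iff_of_pos_right hlog2).2 hEnt
  have step2 : (1/4 + Real.log d * ∑ i, |p i - q i|) / Real.log 2
      = (1/4) / Real.log 2 + (Real.log d / Real.log 2) * ∑ i, |p i - q i| := by
    field_simp
  have step3 : (1/4 : ℝ) / Real.log 2 ≤ 1 / Real.exp 1 := by
    rw [div_le_div_iff₀ hlog2 (Real.exp_pos 1)]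
    nlinarith [Real.exp_one_lt_d9, Real.log_two_gt_d9]
  have step4 : (Real.log d / Real.log 2) * ∑ i, |p i - q i| ≤
      Real.logb 2 d * traceNorm (ρ - ω) := by
    rw [Real.log_div_log]
    apply mul_le_mul_of_nonneg_left hT
    rw [← Real.log_div_log]
    positivity
  linarith
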